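/- For all real numbers a, t, p, the integral over s in (-∞, ∞) of Φ(a(s-t)+p)·φ(s) ds equals Φ((p-at)/√(1+a²)), where φ(s) = e^{-s²/2}/√(2π) is the standard Gaussian density and Φ is its cumulative distribution function. -/

import Mathlib

open Real MeasureTheory Set Filter
open scoped ENNReal

noncomputable def phi (s : ℝ) : ℝ := Real.exp (-s ^ 2 / 2) / Real.sqrt (2 * Real.pi)

noncomputable def Phi (t : ℝ) : ℝ := ∫ s in Set.Iic t, phi s

lemma phi_nonneg (s : ℝ) : 0 ≤ phi s := by unfold phi; positivity

lemma phi_continuous : Continuous phi := by unfold phi; fun_prop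

lemma phi_integrable : Integrable phi := by
  have h := integrable_exp_neg_mul_sq (b := (1:ℝ)/2) (by norm_num)
  have : phi = fun s => Real.exp (-(1/2) * s ^ 2) / Real.sqrt (2 * π) := by
    funext s; unfold phi; congr 1; ring
  rw [this]
  exact h.div_const _

lemma Phi_nonneg (x : ℝ) : 0 ≤ Phi x :=
  setIntegral_nonneg measurableSet_Iic fun s _ => phi_nonneg s

lemma Phi_mono : Monotone Phi := fun x y hxy =>
  setIntegral_mono_set phi_integrable.restrict (ae_of_all _ phi_nonneg)
    (HasSubset.Subset.eventuallyLE (Iic_subset_Iic.mpr hxy))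

lemma ofReal_Phi (x : ℝ) :
    ENNReal.ofReal (Phi x) = ∫⁻ u in Iic x, ENNReal.ofReal (phi u) := by
  rw [Phi, ofReal_integral_eq_lintegral_ofReal phi_integrable.restrict
    (ae_of_all _ phi_nonneg)]

lemma lint_shift (c b : ℝ) (g : ℝ → ℝ≥0∞) :
    ∫⁻ u in Iic (b + c), g u = ∫⁻ w in Iic b, g (w + c) := by
  rw [← lintegral_indicator measurableSet_Iic _, ← lintegral_indicator measurableSet_Iic _,
    ← lintegral_add_right_eq_self (fun u => (Iic (b + c)).indicator g u) c]
  congr 1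
  funext w
  simp [Set.indicator_apply, Set.mem_Iic]

lemma phi_mul_phi (a w s : ℝ) : phi (w + a * s) * phi s
    = (Real.exp (-w ^ 2 / (2 * (1 + a ^ 2))) / (2 * π))
      * Real.exp (-((1 + a ^ 2) / 2) * (s + a * w / (1 + a ^ 2)) ^ 2) := by
  have h2π : (0:ℝ) < 2 * π := by positivity
  have hc : (0:ℝ) < 1 + a ^ 2 := by positivity
  unfold phi
  rw [div_mul_div_comm, ← Real.exp_add, Real.mul_self_sqrt h2π.le,
    div_mul_eq_mul_div, ← Real.exp_add]
  congr 1
  rw [Real.exp_eq_exp]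
  field_simp
  ring

lemma inner_integrable (a w : ℝ) : Integrable (fun s => phi (w + a * s) * phi s) := by
  have hc : (0:ℝ) < (1 + a ^ 2) / 2 := by positivity
  simp only [phi_mul_phi]
  exact ((integrable_exp_neg_mul_sq hc).comp_add_right (a * w / (1 + a ^ 2))).const_mul _

lemma inner_int (a w : ℝ) :
    ∫ s, phi (w + a * s) * phi s
      = phi (w / Real.sqrt (1 + a ^ 2)) / Real.sqrt (1 + a ^ 2) := by
  have hc : (0:ℝ) < 1 + a ^ 2 := by positivity
  have h2π : (0:ℝ) < 2 * π := by positivity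
  simp only [phi_mul_phi]
  rw [integral_const_mul,
    integral_add_right_eq_self (fun x => Real.exp (-((1 + a ^ 2) / 2) * x ^ 2))
      (a * w / (1 + a ^ 2)),
    integral_gaussian,
    show π / ((1 + a ^ 2) / 2) = 2 * π / (1 + a ^ 2) by field_simp,
    Real.sqrt_div h2π.le]
  unfold phi
  rw [div_pow, Real.sq_sqrt hc.le,
    show -(w ^ 2 / (1 + a ^ 2)) / 2 = -w ^ 2 / (2 * (1 + a ^ 2)) by rw [neg_div, neg_div, div_div, mul_comm]]
  have hs2 : Real.sqrt (2 * π) ≠ 0 := by positivity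
  have hsc : Real.sqrt (1 + a ^ 2) ≠ 0 := by positivity
  rw [div_mul_div_comm, div_div, div_eq_div_iff (by positivity) (by positivity)]
  linear_combination (Real.exp (-w ^ 2 / (2 * (1 + a ^ 2))) * Real.sqrt (1 + a ^ 2)) * Real.mul_self_sqrt h2π.le

lemma scale_int (b r : ℝ) (hr : 0 < r) :
    ∫ w in Iic b, phi (w / r) / r = Phi (b / r) := by
  rw [← integral_indicator measurableSet_Iic]
  have h : ∀ w, (Iic b).indicator (fun w => phi (w / r) / r) w
      = ((Iic (b / r)).indicator phi (w / r)) / r := by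
    intro w
    simp only [Set.indicator_apply, Set.mem_Iic, div_le_div_iff_of_pos_right hr]
    by_cases hw : w ≤ b <;> simp [hw]
  simp only [h]
  rw [integral_div, MeasureTheory.Measure.integral_comp_div ((Iic (b / r)).indicator phi) r,
    abs_of_pos hr, smul_eq_mul, mul_div_cancel_left₀ _ hr.ne',
    integral_indicator measurableSet_Iic]
  rfl

theorem stmt_0 (a t p : ℝ) :
    ∫ s, Phi (a * (s - t) + p) * phi s = Phi ((p - a * t) / Real.sqrt (1 + a ^ 2)) := by
  have hc : (0:ℝ) < 1 + a ^ 2 := by positivity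
  have hsq : (0:ℝ) < Real.sqrt (1 + a ^ 2) := Real.sqrt_pos.mpr hc
  set sq := Real.sqrt (1 + a ^ 2) with hsqdef
  set b := p - a * t with hb
  have h1 : ∀ s : ℝ, a * (s - t) + p = b + a * s := by intro s; rw [hb]; ring
  simp only [h1]
  have hmeas : Measurable fun s => Phi (b + a * s) * phi s :=
    (Phi_mono.measurable.comp (by fun_prop)).mul phi_continuous.measurable
  rw [integral_eq_lintegral_of_nonneg_ae
    (ae_of_all _ fun s => mul_nonneg (Phi_nonneg _) (phi_nonneg _))
    hmeas.aestronglyMeasurable]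
  have hpm : ∀ c : ℝ, Measurable fun w : ℝ => ENNReal.ofReal (phi (w + c)) := fun c =>
    (phi_continuous.measurable.comp (measurable_id.add_const c)).ennreal_ofReal
  have step1 : ∀ s : ℝ, ENNReal.ofReal (Phi (b + a * s) * phi s)
      = ∫⁻ w in Iic b, ENNReal.ofReal (phi (w + a * s)) * ENNReal.ofReal (phi s) := by
    intro s
    rw [ENNReal.ofReal_mul (Phi_nonneg _), ofReal_Phi, lint_shift (a * s) b,
      ← lintegral_mul_const _ (hpm (a * s))]
  simp only [step1]
  have hunc : AEMeasurable (Function.uncurry fun s w =>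
      ENNReal.ofReal (phi (w + a * s)) * ENNReal.ofReal (phi s))
      (volume.prod (volume.restrict (Iic b))) := by
    apply Measurable.aemeasurable
    show Measurable ((fun x : ℝ × ℝ => ENNReal.ofReal (phi (x.2 + a * x.1))) * fun x => ENNReal.ofReal (phi x.1))
    apply Measurable.mul
    · exact (phi_continuous.measurable.comp (by fun_prop)).ennreal_ofReal
    · exact (phi_continuous.measurable.comp measurable_fst).ennreal_ofReal
  rw [lintegral_lintegral_swap hunc]
  have step2 : ∀ w : ℝ, (∫⁻ s, ENNReal.ofReal (phi (w + a * s)) * ENNReal.ofReal (phi s))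
      = ENNReal.ofReal (phi (w / sq) / sq) := by
    intro w
    have hmul : (fun s => ENNReal.ofReal (phi (w + a * s)) * ENNReal.ofReal (phi s))
        = fun s => ENNReal.ofReal (phi (w + a * s) * phi s) :=
      funext fun s => (ENNReal.ofReal_mul (phi_nonneg _)).symm
    rw [hmul, ← ofReal_integral_eq_lintegral_ofReal (inner_integrable a w)
      (ae_of_all _ fun s => mul_nonneg (phi_nonneg _) (phi_nonneg _)), inner_int]
  simp only [step2]
  have hint : Integrable (fun w => phi (w / sq) / sq) (volume.restrict (Iic b)) :=
    ((phi_integrable.comp_div hsq.ne').div_const sq).restrict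
  rw [← ofReal_integral_eq_lintegral_ofReal hint
    (ae_of_all _ fun w => div_nonneg (phi_nonneg _) hsq.le),
    scale_int b sq hsq, ENNReal.toReal_ofReal (Phi_nonneg _)]
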